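/- Let T ∈ B(H) be dissipative (Im(T) ≥ 0) with T⁻¹ ∈ B(H), and let log(T) = −i ∫₀^∞ dλ ((T + iλ I_H)⁻¹ − (1 + iλ)⁻¹ I_H) ∈ B(H). Then the imaginary part of log(T) satisfies the operator inequalities 0 ≤ Im(log(T)) ≤ π I_H. -/

import Mathlib

open Complex Filter MeasureTheory TopologicalSpace ContinuousLinearMap
open scoped InnerProductSpace Topology

noncomputable section

namespace SpectralShift

variable {H : Type*} [NormedAddCommGroup H] [InnerProductSpace ℂ H] [CompleteSpace H]

/-- The imaginary part `(T - T*)/(2i)` of a bounded operator. -/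
def imPart (T : H →L[ℂ] H) : H →L[ℂ] H :=
  ((2 * Complex.I)⁻¹ : ℂ) • (T - ContinuousLinearMap.adjoint T)

/-- An operator-valued Herglotz function: analytic on the open upper half-plane with
nonnegative imaginary part there. -/
def IsHerglotz (M : ℂ → H →L[ℂ] H) : Prop :=
  DifferentiableOn ℂ M {z : ℂ | 0 < z.im} ∧ ∀ z : ℂ, 0 < z.im → (imPart (M z)).IsPositive

/-- The integrand `(T + iλ)⁻¹ - (1 + iλ)⁻¹ I` in the integral representation of `log T`. -/
def logIntegrand (T : H →L[ℂ] H) (t : ℝ) : H →L[ℂ] H :=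
  Ring.inverse (T + ((t : ℂ) * Complex.I) • (1 : H →L[ℂ] H)) -
    (((1 : ℂ) + (t : ℂ) * Complex.I)⁻¹) • (1 : H →L[ℂ] H)

/-- `log T = -i ∫₀^∞ ((T + iλ)⁻¹ - (1 + iλ)⁻¹ I) dλ` as a norm-convergent improper
Riemann integral, for a dissipative boundedly invertible `T`. -/
def opLog (T : H →L[ℂ] H) : H →L[ℂ] H :=
  limUnder atTop (fun R : ℝ => (-Complex.I) • ∫ t in (0:ℝ)..R, logIntegrand T t)

/-- The logarithm `log S = (log S*)*` of an operator `S` with `-S` dissipative. -/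
def opLogAnti (T : H →L[ℂ] H) : H →L[ℂ] H :=
  ContinuousLinearMap.adjoint (opLog (ContinuousLinearMap.adjoint T))

/-- The logarithm of a Herglotz-type operator family on `ℂ ∖ ℝ`, using `log T` in the
upper half-plane and the convention `log S = (log S*)*` in the lower half-plane. -/
def logHerg (Φ : ℂ → H →L[ℂ] H) (z : ℂ) : H →L[ℂ] H :=
  if 0 < z.im then opLog (Φ z) else opLogAnti (Φ z)

/-- The logarithm of an anti-Herglotz-type operator family on `ℂ ∖ ℝ` (nonpositive
imaginary part in the upper half-plane). -/
def logAntiHerg (Φ : ℂ → H →L[ℂ] H) (z : ℂ) : H →L[ℂ] H :=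
  if 0 < z.im then opLogAnti (Φ z) else opLog (Φ z)

/-- Trace class: absolute summability of the diagonal in every Hilbert basis. -/
def IsTraceClass (T : H →L[ℂ] H) : Prop :=
  ∀ (w : Set H) (b : HilbertBasis w ℂ H), Summable fun i => ‖⟪(b i : H), T (b i)⟫_ℂ‖

/-- The trace, computed in a fixed Hilbert basis (basis-independent for trace
class operators). -/
def trH (T : H →L[ℂ] H) : ℂ :=
  ∑' i, ⟪((exists_hilbertBasis ℂ H).choose_spec.choose i : H),
    T ((exists_hilbertBasis ℂ H).choose_spec.choose i)⟫_ℂ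

/-- The trace norm, via duality with bounded operators (the correct value for trace
class operators). -/
def traceNorm (T : H →L[ℂ] H) : ℝ :=
  ⨆ B : {B : H →L[ℂ] H // ‖B‖ ≤ 1}, ‖trH (T * (B : H →L[ℂ] H))‖

/-- Hilbert-Schmidt operators. -/
def IsHilbertSchmidt (K : H →L[ℂ] H) : Prop :=
  ∀ (w : Set H) (b : HilbertBasis w ℂ H), Summable fun i => ‖K (b i)‖ ^ 2

/-- A (possibly unbounded) self-adjoint operator in `H`: a densely defined symmetric
operator possessing everywhere-defined bounded resolvents at every non-real point. -/
structure SelfAdjointOp (H : Type*) [NormedAddCommGroup H] [InnerProductSpace ℂ H]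
    [CompleteSpace H] where
  dom : Submodule ℂ H
  dense_dom : Dense (dom : Set H)
  op : dom →ₗ[ℂ] H
  symmetric : ∀ x y : dom, ⟪op x, (y : H)⟫_ℂ = ⟪(x : H), op y⟫_ℂ
  resolvent : ℂ → H →L[ℂ] H
  resolvent_mem : ∀ {z : ℂ}, z.im ≠ 0 → ∀ x : H, resolvent z x ∈ dom
  op_resolvent : ∀ {z : ℂ} (hz : z.im ≠ 0) (x : H),
    op ⟨resolvent z x, resolvent_mem hz x⟩ - z • resolvent z x = x
  resolvent_op : ∀ {z : ℂ} (hz : z.im ≠ 0) (x : dom),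
    resolvent z (op x - z • (x : H)) = x

/-- `B = A + V` for a bounded operator `V` (with `dom B = dom A`). -/
def IsSumOf (B A : SelfAdjointOp H) (V : H →L[ℂ] H) : Prop :=
  B.dom = A.dom ∧ ∀ (x : H) (hxB : x ∈ B.dom) (hxA : x ∈ A.dom),
    B.op ⟨x, hxB⟩ = A.op ⟨x, hxA⟩ + V x

/-- `R` is the (bounded, everywhere defined) resolvent `(A - z)⁻¹` of `A` at `z`. -/
def SelfAdjointOp.IsResolventAt (A : SelfAdjointOp H) (z : ℂ) (R : H →L[ℂ] H) : Prop :=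
  (∀ x : H, R x ∈ A.dom) ∧
  (∀ (x : H) (hx : R x ∈ A.dom), A.op ⟨R x, hx⟩ - z • R x = x) ∧
  (∀ x : A.dom, R (A.op x - z • (x : H)) = x)

/-- `E` is the projection-valued spectral measure of the self-adjoint operator `A`. -/
def IsSpectralMeasure (A : SelfAdjointOp H) (E : Set ℝ → H →L[ℂ] H) : Prop :=
  (∀ B : Set ℝ, MeasurableSet B → IsSelfAdjoint (E B)) ∧
  (∀ B C : Set ℝ, MeasurableSet B → MeasurableSet C → E B * E C = E (B ∩ C)) ∧
  (E Set.univ = 1) ∧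
  (∀ (f : ℕ → Set ℝ), (∀ n, MeasurableSet (f n)) → Pairwise (Function.onFun Disjoint f) →
    ∀ x : H, HasSum (fun n => E (f n) x) (E (⋃ n, f n) x)) ∧
  ∃ μ : H → Measure ℝ,
    (∀ (f : H) (B : Set ℝ), MeasurableSet B → μ f B = ENNReal.ofReal (⟪f, E B f⟫_ℂ).re) ∧
    ∀ (z : ℂ), z.im ≠ 0 → ∀ f : H,
      ⟪f, A.resolvent z f⟫_ℂ = ∫ l : ℝ, ((l : ℂ) - z)⁻¹ ∂(μ f)

/-- Invertibility of `T` restricted to the range of the orthogonal projection `P`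
(for `T` commuting with `P`), with inverse `S` supported in `ran P`. -/
def InvertibleOn (T P : H →L[ℂ] H) : Prop :=
  ∃ S : H →L[ℂ] H, S * P = S ∧ P * S = S ∧ S * (T * P) = P ∧ (P * T) * S = P

/-- The spectral projection `J₊ = (I + J)/2` onto `H₊` for a self-adjoint unitary `J`. -/
def Jplus (J : H →L[ℂ] H) : H →L[ℂ] H := ((2 : ℂ)⁻¹) • (1 + J)

/-- The spectral projection `J₋ = (I - J)/2` onto `H₋` for a self-adjoint unitary `J`. -/
def Jminus (J : H →L[ℂ] H) : H →L[ℂ] H := ((2 : ℂ)⁻¹) • (1 - J)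

/-- `Φ₊(z) = I + J₊ K* (H₀ - z)⁻¹ K J₊`, the operator on `H` inducing `Φ₊(z)` on `H₊`
(and the identity on `H₋`). -/
def PhiPlus (H0 : SelfAdjointOp H) (J K : H →L[ℂ] H) (z : ℂ) : H →L[ℂ] H :=
  1 + Jplus J * (ContinuousLinearMap.adjoint K * H0.resolvent z * K) * Jplus J

/-- `Φ̃₋(z) = I - J₋ K* (H₊ - z)⁻¹ K J₋`, the operator on `H` inducing `Φ̃₋(z)` on `H₋`
(and the identity on `H₊`). -/
def PhiMinusT (Hp : SelfAdjointOp H) (J K : H →L[ℂ] H) (z : ℂ) : H →L[ℂ] H :=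
  1 - Jminus J * (ContinuousLinearMap.adjoint K * Hp.resolvent z * K) * Jminus J

section AuxiliaryLemmas
open Set

lemma inner_imPart_apply (S : H →L[ℂ] H) (y : H) :
    ⟪imPart S y, y⟫_ℂ = (((⟪y, S y⟫_ℂ).im : ℝ) : ℂ) := by
  set w := ⟪y, S y⟫_ℂ with hw
  have h1 : ⟪imPart S y, y⟫_ℂ
      = (starRingEnd ℂ) ((2 * Complex.I)⁻¹) * (⟪S y, y⟫_ℂ - ⟪ContinuousLinearMap.adjoint S y, y⟫_ℂ) := by
    simp [imPart, inner_smul_left, inner_sub_left]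
  rw [h1, ContinuousLinearMap.adjoint_inner_left]
  have h2 : ⟪S y, y⟫_ℂ = (starRingEnd ℂ) w := by rw [hw, inner_conj_symm]
  rw [h2]
  have h3 : (starRingEnd ℂ) w - w = -2 * w.im * Complex.I := by
    simp [Complex.ext_iff]; ring
  rw [h3]
  have h4 : (starRingEnd ℂ) ((2 * Complex.I)⁻¹) = Complex.I / 2 := by
    simp [Complex.ext_iff]
  rw [h4]
  linear_combination (-(w.im : ℂ)) * Complex.I_sq

lemma reApplyInnerSelf_imPart (S : H →L[ℂ] H) (y : H) :
    (imPart S).reApplyInnerSelf y = (⟪y, S y⟫_ℂ).im := by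
  rw [ContinuousLinearMap.reApplyInnerSelf_apply, inner_imPart_apply]
  simp

lemma isSelfAdjoint_imPart (S : H →L[ℂ] H) : IsSelfAdjoint (imPart S) := by
  have h : (starRingEnd ℂ) ((2 * Complex.I)⁻¹) = -(2 * Complex.I)⁻¹ := by
    simp [Complex.ext_iff]
  show star _ = _
  rw [imPart, star_smul, star_sub, ContinuousLinearMap.star_eq_adjoint,
    ContinuousLinearMap.star_eq_adjoint, ContinuousLinearMap.adjoint_adjoint]
  rw [show (starRingEnd ℂ) = (star : ℂ → ℂ) from rfl] at h
  rw [h, neg_smul, ← smul_neg, neg_sub]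

lemma im_inner_nonneg {T : H →L[ℂ] H} (hT : (imPart T).IsPositive) (y : H) :
    0 ≤ (⟪y, T y⟫_ℂ).im := by
  have := hT.2 y
  rwa [reApplyInnerSelf_imPart] at this

lemma inner_shift_apply (T : H →L[ℂ] H) (z : ℂ) (y : H) :
    ⟪y, (T + z • (1 : H →L[ℂ] H)) y⟫_ℂ = ⟪y, T y⟫_ℂ + z * (‖y‖ : ℂ) ^ 2 := by
  simp [inner_add_right, inner_smul_right, inner_self_eq_norm_sq_to_K]

lemma im_inner_shift {T : H →L[ℂ] H} (hT : (imPart T).IsPositive) (z : ℂ) (y : H) :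
    z.im * ‖y‖ ^ 2 ≤ (⟪y, (T + z • (1 : H →L[ℂ] H)) y⟫_ℂ).im := by
  rw [inner_shift_apply]
  have h1 : (z * (‖y‖ : ℂ) ^ 2).im = z.im * ‖y‖ ^ 2 := by
    simp [Complex.mul_im, ← Complex.ofReal_pow]
  rw [Complex.add_im, h1]
  have := im_inner_nonneg hT y
  linarith

lemma norm_shift_lb {T : H →L[ℂ] H} (hT : (imPart T).IsPositive) {z : ℂ}
    (hz : 0 < z.im) (y : H) : z.im * ‖y‖ ≤ ‖(T + z • (1 : H →L[ℂ] H)) y‖ := by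
  rcases eq_or_ne y 0 with rfl | hy
  · simp
  · have h1 := im_inner_shift hT z y
    have h2 : (⟪y, (T + z • (1 : H →L[ℂ] H)) y⟫_ℂ).im
        ≤ ‖y‖ * ‖(T + z • (1 : H →L[ℂ] H)) y‖ := by
      calc (⟪y, (T + z • (1 : H →L[ℂ] H)) y⟫_ℂ).im
          ≤ ‖⟪y, (T + z • (1 : H →L[ℂ] H)) y⟫_ℂ‖ := Complex.im_le_norm _
        _ ≤ ‖y‖ * ‖(T + z • (1 : H →L[ℂ] H)) y‖ := by
            exact norm_inner_le_norm _ _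
    have hy' : 0 < ‖y‖ := norm_pos_iff.mpr hy
    have := h1.trans h2
    nlinarith [sq_nonneg ‖y‖]

lemma norm_shift_lb_abs (T : H →L[ℂ] H) (z : ℂ) (y : H) :
    (‖z‖ - ‖T‖) * ‖y‖ ≤ ‖(T + z • (1 : H →L[ℂ] H)) y‖ := by
  have h1 : ‖z • y‖ ≤ ‖(T + z • (1 : H →L[ℂ] H)) y‖ + ‖T y‖ := by
    calc ‖z • y‖ = ‖(T + z • (1 : H →L[ℂ] H)) y - T y‖ := by
          congr 1; simp
      _ ≤ ‖(T + z • (1 : H →L[ℂ] H)) y‖ + ‖T y‖ := norm_sub_le _ _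
  have h2 : ‖T y‖ ≤ ‖T‖ * ‖y‖ := T.le_opNorm y
  have h3 : ‖z • y‖ = ‖z‖ * ‖y‖ := by
    rw [norm_smul]
  nlinarith

lemma isUnit_shift {T : H →L[ℂ] H} (hT : (imPart T).IsPositive) {z : ℂ}
    (hz : 0 < z.im) : IsUnit (T + z • (1 : H →L[ℂ] H)) := by
  set A := T + z • (1 : H →L[ℂ] H) with hA
  have hlb : ∀ y, z.im * ‖y‖ ≤ ‖A y‖ := norm_shift_lb hT hz
  have hker : A.ker = ⊥ := by
    rw [LinearMap.ker_eq_bot']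
    intro y hy
    have h0 := hlb y
    rw [show A y = 0 from hy, norm_zero] at h0
    have h1 : ‖y‖ = 0 := by nlinarith [norm_nonneg y]
    simpa using h1
  have hanti : AntilipschitzWith (z.im⁻¹).toNNReal A := by
    apply ContinuousLinearMap.antilipschitz_of_bound
    intro y
    rw [Real.coe_toNNReal _ (by positivity)]
    rw [inv_mul_eq_div, le_div_iff₀ hz]
    calc ‖y‖ * z.im = z.im * ‖y‖ := by ring
      _ ≤ ‖A y‖ := hlb y
  have hclosed : IsClosed (A.range : Set H) := by
    have h := hanti.isClosed_range A.uniformContinuous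
    have : (A.range : Set H) = Set.range A := by
      ext v; simp [LinearMap.mem_range, Set.mem_range]
    rw [this]; exact h
  have hrange : A.range = ⊤ := by
    haveI : CompleteSpace (A.range) := hclosed.completeSpace_coe
    rw [← Submodule.orthogonal_eq_bot_iff]
    rw [Submodule.eq_bot_iff]
    intro y hy
    have hAy : ContinuousLinearMap.adjoint A y = 0 := by
      have h0 : ∀ u : H, ⟪u, ContinuousLinearMap.adjoint A y⟫_ℂ = 0 := by
        intro u
        rw [ContinuousLinearMap.adjoint_inner_right]
        exact hy (A u) (LinearMap.mem_range_self _ u)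
      have := h0 (ContinuousLinearMap.adjoint A y)
      rwa [inner_self_eq_zero] at this
    have hadj : ContinuousLinearMap.adjoint A
        = ContinuousLinearMap.adjoint T + (starRingEnd ℂ) z • (1 : H →L[ℂ] H) := by
      rw [← ContinuousLinearMap.star_eq_adjoint, hA, star_add, star_smul,
        ContinuousLinearMap.star_eq_adjoint]
      simp
    rw [hadj] at hAy
    have h1 : ContinuousLinearMap.adjoint T y = -((starRingEnd ℂ) z) • y := by
      have : ContinuousLinearMap.adjoint T y + (starRingEnd ℂ) z • y = 0 := by
        simpa using hAy
      linear_combination (norm := module) this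
    have h2 : ⟪y, ContinuousLinearMap.adjoint T y⟫_ℂ = -(starRingEnd ℂ) z * ⟪y, y⟫_ℂ := by
      rw [h1, inner_smul_right]
    have h3 : (⟪y, ContinuousLinearMap.adjoint T y⟫_ℂ).im ≤ 0 := by
      have : ⟪y, ContinuousLinearMap.adjoint T y⟫_ℂ = (starRingEnd ℂ) ⟪y, T y⟫_ℂ := by
        rw [ContinuousLinearMap.adjoint_inner_right, inner_conj_symm]
      rw [this, Complex.conj_im]
      simpa using im_inner_nonneg hT y
    have h4 : (-(starRingEnd ℂ) z * ⟪y, y⟫_ℂ).im = z.im * ‖y‖^2 := by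
      rw [inner_self_eq_norm_sq_to_K]
      simp [Complex.mul_im, ← Complex.ofReal_pow]
    rw [h2] at h3
    rw [h4] at h3
    have : ‖y‖^2 ≤ 0 := by nlinarith
    have : ‖y‖ = 0 := by nlinarith [norm_nonneg y, sq_nonneg ‖y‖]
    simpa using this
  set e := ContinuousLinearEquiv.ofBijective A hker hrange with he
  have h5 : ∀ u, e u = A u := fun u =>
    congrFun (ContinuousLinearEquiv.coeFn_ofBijective A hker hrange) u
  refine ⟨⟨A, (e.symm : H →L[ℂ] H), ?_, ?_⟩, rfl⟩
  · ext v
    simp only [ContinuousLinearMap.mul_apply, ContinuousLinearMap.one_apply,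
      ContinuousLinearEquiv.coe_coe]
    rw [← h5]
    exact e.apply_symm_apply v
  · ext v
    simp only [ContinuousLinearMap.mul_apply, ContinuousLinearMap.one_apply,
      ContinuousLinearEquiv.coe_coe]
    rw [← h5]
    exact e.symm_apply_apply v

lemma norm_ringInverse_le {A : H →L[ℂ] H} (hA : IsUnit A) {c : ℝ} (hc : 0 < c)
    (hlb : ∀ y, c * ‖y‖ ≤ ‖A y‖) : ‖(Ring.inverse A : H →L[ℂ] H)‖ ≤ c⁻¹ := by
  apply ContinuousLinearMap.opNorm_le_bound _ (by positivity)
  intro v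
  have h1 : A (Ring.inverse A v) = v := by
    rw [← ContinuousLinearMap.mul_apply, Ring.mul_inverse_cancel _ hA,
      ContinuousLinearMap.one_apply]
  have h2 := hlb (Ring.inverse A v)
  rw [h1] at h2
  rw [inv_mul_eq_div, le_div_iff₀ hc]
  linarith


def qf (T : H →L[ℂ] H) (x : H) (z : ℂ) : ℂ :=
  ⟪x, (Ring.inverse (T + z • (1 : H →L[ℂ] H))) x⟫_ℂ

lemma im_qf_nonpos {T : H →L[ℂ] H} (hT : (imPart T).IsPositive) (x : H) {z : ℂ}
    (hz : 0 < z.im) : (qf T x z).im ≤ 0 := by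
  have hu := isUnit_shift hT hz
  set A := T + z • (1 : H →L[ℂ] H) with hA
  set u := Ring.inverse A x with hu2
  have hx : A u = x := by
    rw [hu2, ← ContinuousLinearMap.mul_apply, Ring.mul_inverse_cancel _ hu,
      ContinuousLinearMap.one_apply]
  have h1 : qf T x z = (starRingEnd ℂ) ⟪u, A u⟫_ℂ := by
    rw [inner_conj_symm, hx]; rfl
  rw [h1, Complex.conj_im]
  have h2 := im_inner_shift hT z u
  have h3 : 0 ≤ z.im * ‖u‖ ^ 2 := by positivity
  rw [← hA] at h2
  linarith

lemma norm_inv_shift_le {T : H →L[ℂ] H} (hT : (imPart T).IsPositive) {z : ℂ}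
    (hz : 0 < z.im) : ‖(Ring.inverse (T + z • (1 : H →L[ℂ] H)) : H →L[ℂ] H)‖ ≤ (z.im)⁻¹ :=
  norm_ringInverse_le (isUnit_shift hT hz) hz (norm_shift_lb hT hz)

lemma abs_qf_le {T : H →L[ℂ] H} (hT : (imPart T).IsPositive) (x : H) {z : ℂ}
    (hz : 0 < z.im) : ‖qf T x z‖ ≤ ‖x‖ ^ 2 / z.im := by
  have h1 : ‖qf T x z‖ ≤ ‖x‖ * ‖(Ring.inverse (T + z • (1 : H →L[ℂ] H))) x‖ := by
    exact norm_inner_le_norm _ _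
  have h2 : ‖(Ring.inverse (T + z • (1 : H →L[ℂ] H))) x‖ ≤ (z.im)⁻¹ * ‖x‖ :=
    le_trans ((Ring.inverse (T + z • (1 : H →L[ℂ] H))).le_opNorm x)
      (by gcongr; exact norm_inv_shift_le hT hz)
  calc ‖qf T x z‖ ≤ ‖x‖ * ((z.im)⁻¹ * ‖x‖) := by nlinarith [norm_nonneg x]
    _ = ‖x‖ ^ 2 / z.im := by field_simp

lemma qf_decomp (T : H →L[ℂ] H) (x : H) {z : ℂ} (hz0 : z ≠ 0)
    (hu : IsUnit (T + z • (1 : H →L[ℂ] H))) :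
    qf T x z = z⁻¹ * (((‖x‖ : ℂ)) ^ 2
      - ⟪x, (Ring.inverse (T + z • (1 : H →L[ℂ] H))) (T x)⟫_ℂ) := by
  set A := T + z • (1 : H →L[ℂ] H) with hA
  set B : H →L[ℂ] H := Ring.inverse A with hB
  have h1 : B * T + z • B = 1 := by
    calc B * T + z • B = B * (T + z • (1 : H →L[ℂ] H)) := by
          rw [mul_add, mul_smul_comm, mul_one]
      _ = 1 := Ring.inverse_mul_cancel _ hu
  have h2 : B (T x) + z • (B x) = x := by
    have := congrArg (fun (L : H →L[ℂ] H) => L x) h1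
    simpa [ContinuousLinearMap.add_apply, ContinuousLinearMap.mul_apply,
      ContinuousLinearMap.smul_apply] using this
  have h3 : B x = z⁻¹ • (x - B (T x)) := by
    have h4 : z • (B x) = x - B (T x) := by
      rw [eq_sub_iff_add_eq, add_comm]; exact h2
    rw [← h4, smul_smul, inv_mul_cancel₀ hz0, one_smul]
  show ⟪x, B x⟫_ℂ = _
  rw [h3, inner_smul_right, inner_sub_right]
  congr 2
  rw [inner_self_eq_norm_sq_to_K]
  norm_cast

lemma re_qf_near {T : H →L[ℂ] H} (hT : (imPart T).IsPositive) (x : H) {z : ℂ}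
    (hz : 0 < z.im) (hbig : 2 * ‖T‖ + 2 ≤ ‖z‖) :
    |(qf T x z).re - z.re / Complex.normSq z * ‖x‖ ^ 2|
      ≤ 2 * ‖T‖ * ‖x‖ ^ 2 / Complex.normSq z := by
  have hM : (0:ℝ) ≤ ‖T‖ := norm_nonneg T
  have habs : 0 < ‖z‖ := by linarith
  have hz0 : z ≠ 0 := by
    intro h; rw [h] at habs; simp at habs
  have hu := isUnit_shift hT hz
  set B : H →L[ℂ] H := Ring.inverse (T + z • (1 : H →L[ℂ] H)) with hB
  have hcpos : 0 < ‖z‖ - ‖T‖ := by linarith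
  have hinv : ‖B‖ ≤ (‖z‖ - ‖T‖)⁻¹ :=
    norm_ringInverse_le hu hcpos (norm_shift_lb_abs T z)
  have hinv2 : ‖B‖ ≤ 2 / ‖z‖ := by
    have h1 : ‖z‖ / 2 ≤ ‖z‖ - ‖T‖ := by linarith
    calc ‖B‖ ≤ (‖z‖ - ‖T‖)⁻¹ := hinv
      _ ≤ (‖z‖ / 2)⁻¹ := by
          gcongr
      _ = 2 / ‖z‖ := by
          rw [inv_div]
  set c0 := ⟪x, B (T x)⟫_ℂ with hc0
  have habs_c0 : ‖c0‖ ≤ 2 * ‖T‖ * ‖x‖ ^ 2 / ‖z‖ := by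
    have h1 : ‖c0‖ ≤ ‖x‖ * ‖B (T x)‖ := by
      exact norm_inner_le_norm _ _
    have h3 : ‖T x‖ ≤ ‖T‖ * ‖x‖ := T.le_opNorm x
    have h4 : ‖B (T x)‖ ≤ (2 / ‖z‖) * (‖T‖ * ‖x‖) := by
      calc ‖B (T x)‖ ≤ ‖B‖ * ‖T x‖ := B.le_opNorm _
        _ ≤ (2 / ‖z‖) * (‖T‖ * ‖x‖) :=
            mul_le_mul hinv2 h3 (norm_nonneg _) (by positivity)
    calc ‖c0‖ ≤ ‖x‖ * ((2 / ‖z‖) * (‖T‖ * ‖x‖)) :=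
          le_trans h1 (mul_le_mul_of_nonneg_left h4 (norm_nonneg x))
      _ = 2 * ‖T‖ * ‖x‖ ^ 2 / ‖z‖ := by field_simp
  have hd := qf_decomp T x hz0 hu
  rw [← hB] at hd
  have hre : (qf T x z).re = (z⁻¹).re * ‖x‖ ^ 2 - (z⁻¹ * c0).re := by
    rw [hd, mul_sub]
    have h7 : (z⁻¹ * ((‖x‖ : ℂ)) ^ 2).re = (z⁻¹).re * ‖x‖ ^ 2 := by
      simp [Complex.mul_re, ← Complex.ofReal_pow]
    rw [Complex.sub_re, h7, hc0]
  rw [Complex.inv_re] at hre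
  have h8 : (qf T x z).re - z.re / Complex.normSq z * ‖x‖ ^ 2 = -(z⁻¹ * c0).re := by
    rw [hre]; ring
  rw [h8, abs_neg]
  have h5 : |(z⁻¹ * c0).re| ≤ ‖z⁻¹ * c0‖ := Complex.abs_re_le_norm _
  have h6 : ‖z⁻¹ * c0‖ = ‖c0‖ / ‖z‖ := by
    rw [norm_mul, norm_inv]; ring
  calc |(z⁻¹ * c0).re| ≤ ‖c0‖ / ‖z‖ := by rw [← h6]; exact h5
    _ ≤ (2 * ‖T‖ * ‖x‖ ^ 2 / ‖z‖) / ‖z‖ := by gcongr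
    _ = 2 * ‖T‖ * ‖x‖ ^ 2 / Complex.normSq z := by
        rw [div_div, ← Complex.sq_norm]; ring_nf

lemma differentiableAt_shift (T : H →L[ℂ] H) (z : ℂ) :
    DifferentiableAt ℂ (fun w : ℂ => T + w • (1 : H →L[ℂ] H)) z :=
  (differentiableAt_id.smul_const _).const_add _

lemma differentiableAt_qf (T : H →L[ℂ] H) (x : H) {z : ℂ}
    (hu : IsUnit (T + z • (1 : H →L[ℂ] H))) : DifferentiableAt ℂ (qf T x) z := by
  have h2 : DifferentiableAt ℂ (fun w : ℂ => Ring.inverse (T + w • (1 : H →L[ℂ] H))) z :=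
    (differentiableAt_shift T z).inverse hu
  exact (((innerSL ℂ x).comp
    ((ContinuousLinearMap.apply ℂ H x))).differentiableAt).comp z h2

lemma isUnit_shift_real {T : H →L[ℂ] H} (hT : (imPart T).IsPositive) (hTinv : IsUnit T)
    {t : ℝ} (ht : 0 ≤ t) : IsUnit (T + (((t : ℂ) * Complex.I)) • (1 : H →L[ℂ] H)) := by
  rcases eq_or_lt_of_le ht with h | h
  · have : ((t : ℂ) * Complex.I) = 0 := by rw [← h]; simp
    rw [this, zero_smul, add_zero]
    exact hTinv
  · exact isUnit_shift hT (by simpa using h)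

lemma continuousAt_logIntegrand {T : H →L[ℂ] H} (hT : (imPart T).IsPositive)
    (hTinv : IsUnit T) {t : ℝ} (ht : 0 ≤ t) : ContinuousAt (logIntegrand T) t := by
  have hu := isUnit_shift_real hT hTinv ht
  have hmap : Continuous (fun s : ℝ => ((s : ℂ) * Complex.I)) :=
    Complex.continuous_ofReal.mul continuous_const
  unfold logIntegrand
  apply ContinuousAt.sub
  · have h2 : ContinuousAt (fun w : ℂ => Ring.inverse (T + w • (1 : H →L[ℂ] H)))
        ((t : ℂ) * Complex.I) := ((differentiableAt_shift T _).inverse hu).continuousAt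
    show ContinuousAt ((fun w : ℂ => Ring.inverse (T + w • (1 : H →L[ℂ] H))) ∘
      (fun s : ℝ => (s : ℂ) * Complex.I)) t
    exact ContinuousAt.comp (f := fun s : ℝ => (s : ℂ) * Complex.I) (x := t)
      h2 hmap.continuousAt
  · apply ContinuousAt.smul (f := fun s : ℝ => ((1 : ℂ) + (s : ℂ) * Complex.I)⁻¹)
      (g := fun _ : ℝ => (1 : H →L[ℂ] H)) _ continuousAt_const
    apply ContinuousAt.inv₀
    · exact (continuous_const.add hmap).continuousAt
    · intro h
      have := congrArg Complex.re h
      simp at this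

lemma inv_shift_identity {T : H →L[ℂ] H} {z : ℂ} (hu : IsUnit (T + z • (1 : H →L[ℂ] H))) :
    (Ring.inverse (T + z • (1 : H →L[ℂ] H))) * T
      + z • (Ring.inverse (T + z • (1 : H →L[ℂ] H)) : H →L[ℂ] H) = 1 := by
  set B : H →L[ℂ] H := Ring.inverse (T + z • (1 : H →L[ℂ] H)) with hB
  calc B * T + z • B = B * (T + z • (1 : H →L[ℂ] H)) := by
        rw [mul_add, mul_smul_comm, mul_one]
    _ = 1 := Ring.inverse_mul_cancel _ hu

lemma logIntegrand_eq {T : H →L[ℂ] H} {t : ℝ}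
    (hu : IsUnit (T + ((t : ℂ) * Complex.I) • (1 : H →L[ℂ] H))) :
    logIntegrand T t = (((1 : ℂ) + (t : ℂ) * Complex.I)⁻¹) •
      ((Ring.inverse (T + ((t : ℂ) * Complex.I) • (1 : H →L[ℂ] H)) : H →L[ℂ] H)
        * ((1 : H →L[ℂ] H) - T)) := by
  set z : ℂ := (t : ℂ) * Complex.I with hz
  set B : H →L[ℂ] H := Ring.inverse (T + z • (1 : H →L[ℂ] H)) with hB
  set c : ℂ := 1 + z with hc
  have hc0 : c ≠ 0 := by
    intro h
    have := congrArg Complex.re h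
    simp [hc, hz] at this
  have h1 : B * ((1 : H →L[ℂ] H) - T) = c • B - 1 := by
    have h2 := inv_shift_identity hu
    rw [mul_sub, mul_one]
    rw [← hB] at h2
    have h3 : B * T = 1 - z • B := by
      rw [← h2]; abel
    rw [h3, hc, add_smul, one_smul]
    abel
  rw [h1, smul_sub, smul_smul, inv_mul_cancel₀ hc0, one_smul]
  show logIntegrand T t = B - c⁻¹ • (1 : H →L[ℂ] H)
  rw [logIntegrand, ← hz, ← hB, hc]

lemma logIntegrand_norm_le {T : H →L[ℂ] H} (hT : (imPart T).IsPositive)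
    {t : ℝ} (ht : 2 * ‖T‖ + 2 ≤ t) :
    ‖logIntegrand T t‖ ≤ (2 * (1 + ‖T‖)) * (1 + t ^ 2)⁻¹ := by
  have hM : (0:ℝ) ≤ ‖T‖ := norm_nonneg T
  have ht2 : (2:ℝ) ≤ t := by linarith
  have ht0 : (0:ℝ) < t := by linarith
  set z : ℂ := (t : ℂ) * Complex.I with hz
  have hzim : z.im = t := by simp [hz]
  have hu : IsUnit (T + z • (1 : H →L[ℂ] H)) := isUnit_shift hT (by rw [hzim]; exact ht0)
  set B : H →L[ℂ] H := Ring.inverse (T + z • (1 : H →L[ℂ] H)) with hB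
  have hBn : ‖B‖ ≤ t⁻¹ := by
    have := norm_inv_shift_le hT (z := z) (by rw [hzim]; exact ht0)
    rwa [hzim] at this
  have habs : t ≤ ‖(1 : ℂ) + (t : ℂ) * Complex.I‖ := by
    calc t = ((1 : ℂ) + (t : ℂ) * Complex.I).im := by simp
      _ ≤ |((1 : ℂ) + (t : ℂ) * Complex.I).im| := le_abs_self _
      _ ≤ ‖_‖ := Complex.abs_im_le_norm _
  rw [logIntegrand_eq hu]
  rw [norm_smul]
  have h1 : ‖(1 : H →L[ℂ] H) - T‖ ≤ 1 + ‖T‖ := by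
    calc ‖(1 : H →L[ℂ] H) - T‖ ≤ ‖(1 : H →L[ℂ] H)‖ + ‖T‖ := norm_sub_le _ _
      _ ≤ 1 + ‖T‖ := by
          have h2 : ‖(1 : H →L[ℂ] H)‖ ≤ 1 := by
            rw [ContinuousLinearMap.one_def]; exact ContinuousLinearMap.norm_id_le
          linarith
  have h3 : ‖((1 : ℂ) + (t : ℂ) * Complex.I)⁻¹‖ ≤ t⁻¹ := by
    rw [norm_inv]
    apply inv_anti₀ ht0
    exact habs
  have h4 : ‖B * ((1 : H →L[ℂ] H) - T)‖ ≤ t⁻¹ * (1 + ‖T‖) := by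
    calc ‖B * ((1 : H →L[ℂ] H) - T)‖ ≤ ‖B‖ * ‖(1 : H →L[ℂ] H) - T‖ := norm_mul_le _ _
      _ ≤ t⁻¹ * (1 + ‖T‖) := mul_le_mul hBn h1 (norm_nonneg _) (by positivity)
  calc ‖((1 : ℂ) + (t : ℂ) * Complex.I)⁻¹‖ * ‖B * ((1 : H →L[ℂ] H) - T)‖
      ≤ t⁻¹ * (t⁻¹ * (1 + ‖T‖)) :=
        mul_le_mul h3 h4 (norm_nonneg _) (by positivity)
    _ = (1 + ‖T‖) / t ^ 2 := by rw [div_eq_mul_inv]; ring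
    _ ≤ (2 * (1 + ‖T‖)) / (1 + t ^ 2) := by
        rw [div_le_div_iff₀ (by positivity) (by positivity)]
        nlinarith
    _ = (2 * (1 + ‖T‖)) * (1 + t ^ 2)⁻¹ := by rw [div_eq_mul_inv]

lemma integrableOn_logIntegrand {T : H →L[ℂ] H} (hT : (imPart T).IsPositive)
    (hTinv : IsUnit T) : IntegrableOn (logIntegrand T) (Ioi (0:ℝ)) := by
  have hM : (0:ℝ) ≤ ‖T‖ := norm_nonneg T
  set t0 : ℝ := 2 * ‖T‖ + 2 with ht0
  have ht0pos : (0:ℝ) < t0 := by positivity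
  have h1 : IntegrableOn (logIntegrand T) (Ioc 0 t0) := by
    apply (ContinuousOn.integrableOn_Icc ?_).mono_set Ioc_subset_Icc_self
    intro s hs
    exact (continuousAt_logIntegrand hT hTinv hs.1).continuousWithinAt
  have h2 : IntegrableOn (logIntegrand T) (Ioi t0) := by
    haveI : SecondCountableTopologyEither ℝ (H →L[ℂ] H) :=
      secondCountableTopologyEither_of_left ℝ _
    have hmeas : AEStronglyMeasurable (logIntegrand T) (volume.restrict (Ioi t0)) := by
      apply ContinuousOn.aestronglyMeasurable ?_ measurableSet_Ioi
      intro s hs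
      have : (0:ℝ) ≤ s := by
        have := hs.out; linarith
      exact (continuousAt_logIntegrand hT hTinv this).continuousWithinAt
    apply Integrable.mono' (g := fun t : ℝ => (2 * (1 + ‖T‖)) * (1 + t ^ 2)⁻¹)
    · exact (integrable_inv_one_add_sq.integrableOn).const_mul _
    · exact hmeas
    · refine (ae_restrict_iff' measurableSet_Ioi).mpr (Filter.Eventually.of_forall ?_)
      intro t ht
      exact logIntegrand_norm_le hT (le_of_lt ht)
  have hsplit : Ioi (0:ℝ) = Ioc 0 t0 ∪ Ioi t0 := (Ioc_union_Ioi_eq_Ioi ht0pos.le).symm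
  rw [hsplit]
  exact h1.union h2

lemma opLog_eq {T : H →L[ℂ] H} (hT : (imPart T).IsPositive) (hTinv : IsUnit T) :
    opLog T = (-Complex.I) • ∫ t in Ioi (0:ℝ), logIntegrand T t := by
  apply Filter.Tendsto.limUnder_eq
  exact (MeasureTheory.intervalIntegral_tendsto_integral_Ioi 0
    (integrableOn_logIntegrand hT hTinv) tendsto_id).const_smul _

def innerQF (x : H) : (H →L[ℂ] H) →L[ℂ] ℂ :=
  (innerSL ℂ x).comp (ContinuousLinearMap.apply ℂ H x)

lemma innerQF_apply (x : H) (L : H →L[ℂ] H) : innerQF x L = ⟪x, L x⟫_ℂ := rfl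

lemma integrableOn_inner_logIntegrand {T : H →L[ℂ] H} (hT : (imPart T).IsPositive)
    (hTinv : IsUnit T) (x : H) :
    IntegrableOn (fun t => ⟪x, logIntegrand T t x⟫_ℂ) (Ioi (0:ℝ)) :=
  (innerQF x).integrable_comp (integrableOn_logIntegrand hT hTinv)

lemma inner_opLog {T : H →L[ℂ] H} (hT : (imPart T).IsPositive) (hTinv : IsUnit T) (x : H) :
    ⟪x, opLog T x⟫_ℂ = (-Complex.I) * ∫ t in Ioi (0:ℝ), ⟪x, logIntegrand T t x⟫_ℂ := by
  rw [opLog_eq hT hTinv, ContinuousLinearMap.smul_apply, inner_smul_right]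
  congr 1
  exact ((innerQF x).integral_comp_comm (integrableOn_logIntegrand hT hTinv)).symm

lemma inner_logIntegrand (T : H →L[ℂ] H) (x : H) (t : ℝ) :
    ⟪x, logIntegrand T t x⟫_ℂ
      = qf T x ((t : ℂ) * Complex.I)
        - ((1 : ℂ) + (t : ℂ) * Complex.I)⁻¹ * ((‖x‖ : ℂ)) ^ 2 := by
  show ⟪x, (logIntegrand T t) x⟫_ℂ = _
  rw [logIntegrand, ContinuousLinearMap.sub_apply, inner_sub_right,
    ContinuousLinearMap.smul_apply, ContinuousLinearMap.one_apply, inner_smul_right,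
    inner_self_eq_norm_sq_to_K]
  rw [qf]
  norm_cast

lemma re_ref_term (x : H) (t : ℝ) :
    ((((1 : ℂ) + (t : ℂ) * Complex.I)⁻¹) * ((‖x‖ : ℂ)) ^ 2).re
      = (1 + t ^ 2)⁻¹ * ‖x‖ ^ 2 := by
  have hns : Complex.normSq (1 + (t : ℂ) * Complex.I) = 1 + t ^ 2 := by
    simp [Complex.normSq_apply]
    ring
  have h1 : ((1 : ℂ) + (t : ℂ) * Complex.I)⁻¹.re = (1 + t ^ 2)⁻¹ := by
    rw [Complex.inv_re, hns]
    simp [div_eq_mul_inv]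
  have h2 : ((1 : ℂ) + (t : ℂ) * Complex.I)⁻¹.im = -t * (1 + t ^ 2)⁻¹ := by
    rw [Complex.inv_im, hns]
    simp [div_eq_mul_inv]
  rw [show ((‖x‖ : ℂ)) ^ 2 = ((‖x‖ ^ 2 : ℝ) : ℂ) by push_cast; ring]
  rw [Complex.mul_re, Complex.ofReal_re, Complex.ofReal_im, h1]
  ring

lemma integrableOn_re_qf {T : H →L[ℂ] H} (hT : (imPart T).IsPositive)
    (hTinv : IsUnit T) (x : H) :
    IntegrableOn (fun t : ℝ => (qf T x ((t : ℂ) * Complex.I)).re) (Ioi (0:ℝ)) := by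
  have h1 : IntegrableOn (fun t => (⟪x, logIntegrand T t x⟫_ℂ).re) (Ioi (0:ℝ)) :=
    (integrableOn_inner_logIntegrand hT hTinv x).re
  have h2 : IntegrableOn (fun t : ℝ => (1 + t ^ 2)⁻¹ * ‖x‖ ^ 2) (Ioi (0:ℝ)) :=
    (integrable_inv_one_add_sq.integrableOn).mul_const _
  have h3 : IntegrableOn
      (fun t : ℝ => (⟪x, logIntegrand T t x⟫_ℂ).re + (1 + t ^ 2)⁻¹ * ‖x‖ ^ 2)
      (Ioi (0:ℝ)) := h1.add h2
  apply h3.congr_fun ?_ measurableSet_Ioi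
  intro t _
  show (⟪x, logIntegrand T t x⟫_ℂ).re + (1 + t ^ 2)⁻¹ * ‖x‖ ^ 2
    = (qf T x ((t : ℂ) * Complex.I)).re
  rw [inner_logIntegrand, Complex.sub_re, re_ref_term]
  ring

lemma im_inner_opLog {T : H →L[ℂ] H} (hT : (imPart T).IsPositive) (hTinv : IsUnit T)
    (x : H) :
    (⟪x, opLog T x⟫_ℂ).im
      = Real.pi / 2 * ‖x‖ ^ 2 - ∫ t in Ioi (0:ℝ), (qf T x ((t : ℂ) * Complex.I)).re := by
  rw [inner_opLog hT hTinv x]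
  rw [show ∀ w : ℂ, ((-Complex.I) * w).im = -w.re from fun w => by simp]
  have hre : (∫ t in Ioi (0:ℝ), ⟪x, logIntegrand T t x⟫_ℂ).re
      = ∫ t in Ioi (0:ℝ), (⟪x, logIntegrand T t x⟫_ℂ).re :=
    (Complex.reCLM.integral_comp_comm (integrableOn_inner_logIntegrand hT hTinv x)).symm
  rw [hre]
  have hsplit : ∀ t ∈ Ioi (0:ℝ), (⟪x, logIntegrand T t x⟫_ℂ).re
      = (qf T x ((t : ℂ) * Complex.I)).re - (1 + t ^ 2)⁻¹ * ‖x‖ ^ 2 := by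
    intro t _
    rw [inner_logIntegrand, Complex.sub_re, re_ref_term]
  rw [MeasureTheory.setIntegral_congr_fun measurableSet_Ioi hsplit]
  rw [MeasureTheory.integral_sub (integrableOn_re_qf hT hTinv x)
    ((integrable_inv_one_add_sq.integrableOn).mul_const _)]
  rw [MeasureTheory.integral_mul_const, integral_Ioi_inv_one_add_sq]
  simp [Real.arctan_zero]

lemma continuousAt_qf_of_im_pos {T : H →L[ℂ] H} (hT : (imPart T).IsPositive) (x : H)
    {z : ℂ} (hz : 0 < z.im) : ContinuousAt (qf T x) z :=
  (differentiableAt_qf T x (isUnit_shift hT hz)).continuousAt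

lemma II_horiz {T : H →L[ℂ] H} (hT : (imPart T).IsPositive) (x : H) {η : ℝ}
    (hη : 0 < η) (a b : ℝ) :
    IntervalIntegrable (fun s : ℝ => qf T x ((s : ℂ) + (η : ℂ) * Complex.I)) volume a b := by
  apply ContinuousOn.intervalIntegrable
  intro s _
  apply ContinuousAt.continuousWithinAt
  have hmap : Continuous (fun s : ℝ => ((s : ℂ) + (η : ℂ) * Complex.I)) :=
    Complex.continuous_ofReal.add continuous_const
  exact ContinuousAt.comp (f := fun s : ℝ => ((s : ℂ) + (η : ℂ) * Complex.I)) (x := s)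
    (continuousAt_qf_of_im_pos hT x (by simpa using hη)) hmap.continuousAt

lemma II_vert {T : H →L[ℂ] H} (hT : (imPart T).IsPositive) (x : H) (X : ℝ) {η R : ℝ}
    (hη : 0 < η) (hR : 0 < R) :
    IntervalIntegrable (fun t : ℝ => qf T x ((X : ℂ) + (t : ℂ) * Complex.I)) volume η R := by
  apply ContinuousOn.intervalIntegrable
  intro t ht
  have ht0 : 0 < t := by
    rcases Set.mem_uIcc.mp ht with h | h
    · linarith [h.1]
    · linarith [h.1]
  apply ContinuousAt.continuousWithinAt
  have hmap : Continuous (fun t : ℝ => ((X : ℂ) + (t : ℂ) * Complex.I)) :=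
    continuous_const.add (Complex.continuous_ofReal.mul continuous_const)
  exact ContinuousAt.comp (f := fun t : ℝ => ((X : ℂ) + (t : ℂ) * Complex.I)) (x := t)
    (continuousAt_qf_of_im_pos hT x (by simpa using ht0)) hmap.continuousAt

lemma II_axis {T : H →L[ℂ] H} (hT : (imPart T).IsPositive) (x : H) {η R : ℝ}
    (hη : 0 < η) (hR : 0 < R) :
    IntervalIntegrable (fun t : ℝ => qf T x ((t : ℂ) * Complex.I)) volume η R := by
  apply ContinuousOn.intervalIntegrable
  intro t ht
  have ht0 : 0 < t := by
    rcases Set.mem_uIcc.mp ht with h | h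
    · linarith [h.1]
    · linarith [h.1]
  apply ContinuousAt.continuousWithinAt
  have hmap : Continuous (fun t : ℝ => ((t : ℂ) * Complex.I)) :=
    Complex.continuous_ofReal.mul continuous_const
  exact ContinuousAt.comp (f := fun t : ℝ => ((t : ℂ) * Complex.I)) (x := t)
    (continuousAt_qf_of_im_pos hT x (by simpa using ht0)) hmap.continuousAt

lemma rect_re_identity {T : H →L[ℂ] H} (hT : (imPart T).IsPositive) (x : H)
    (X : ℝ) {η R : ℝ} (hη : 0 < η) (hR : η ≤ R) :
    ∫ t in η..R, (qf T x ((t : ℂ) * Complex.I)).re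
      = (∫ s in (0:ℝ)..X, (qf T x ((s : ℂ) + (η : ℂ) * Complex.I)).im)
        - (∫ s in (0:ℝ)..X, (qf T x ((s : ℂ) + (R : ℂ) * Complex.I)).im)
        + ∫ t in η..R, (qf T x ((X : ℂ) + (t : ℂ) * Complex.I)).re := by
  have hRpos : 0 < R := lt_of_lt_of_le hη hR
  have hdiff : DifferentiableOn ℂ (qf T x)
      (Set.uIcc ((⟨0, η⟩ : ℂ)).re ((⟨X, R⟩ : ℂ)).re ×ℂ
        Set.uIcc ((⟨0, η⟩ : ℂ)).im ((⟨X, R⟩ : ℂ)).im) := by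
    intro w hw
    rw [Complex.mem_reProdIm] at hw
    have him : η ≤ w.im := by
      have h2 := hw.2
      rw [show ((⟨0, η⟩ : ℂ)).im = η from rfl, show ((⟨X, R⟩ : ℂ)).im = R from rfl,
        Set.uIcc_of_le hR] at h2
      exact h2.1
    exact (differentiableAt_qf T x
      (isUnit_shift hT (lt_of_lt_of_le hη him))).differentiableWithinAt
  have h0 := Complex.integral_boundary_rect_eq_zero_of_differentiableOn (qf T x)
    (⟨0, η⟩ : ℂ) (⟨X, R⟩ : ℂ) hdiff
  rw [show ((⟨0, η⟩ : ℂ)).re = (0:ℝ) from rfl, show ((⟨0, η⟩ : ℂ)).im = η from rfl,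
    show ((⟨X, R⟩ : ℂ)).re = X from rfl, show ((⟨X, R⟩ : ℂ)).im = R from rfl] at h0
  simp only [Complex.ofReal_zero, zero_add] at h0
  have h1 := congrArg Complex.im h0
  simp only [Complex.sub_im, Complex.add_im, smul_eq_mul, Complex.I_mul_im,
    Complex.zero_im] at h1
  have hB1 : (∫ s in (0:ℝ)..X, qf T x ((s : ℂ) + (η : ℂ) * Complex.I)).im
      = ∫ s in (0:ℝ)..X, (qf T x ((s : ℂ) + (η : ℂ) * Complex.I)).im :=
    (Complex.imCLM.intervalIntegral_comp_comm (II_horiz hT x hη 0 X)).symm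
  have hB2 : (∫ s in (0:ℝ)..X, qf T x ((s : ℂ) + (R : ℂ) * Complex.I)).im
      = ∫ s in (0:ℝ)..X, (qf T x ((s : ℂ) + (R : ℂ) * Complex.I)).im :=
    (Complex.imCLM.intervalIntegral_comp_comm (II_horiz hT x hRpos 0 X)).symm
  have hEX : (∫ t in η..R, qf T x ((X : ℂ) + (t : ℂ) * Complex.I)).re
      = ∫ t in η..R, (qf T x ((X : ℂ) + (t : ℂ) * Complex.I)).re :=
    (Complex.reCLM.intervalIntegral_comp_comm (II_vert hT x X hη hRpos)).symm
  have hE0 : (∫ t in η..R, qf T x ((t : ℂ) * Complex.I)).re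
      = ∫ t in η..R, (qf T x ((t : ℂ) * Complex.I)).re :=
    (Complex.reCLM.intervalIntegral_comp_comm (II_axis hT x hη hRpos)).symm
  rw [hB1, hB2, hEX, hE0] at h1
  linarith

lemma arc_integral_le {X η R : ℝ} (hX : 0 < X) (hη : 0 ≤ η) (hR : η ≤ R) :
    ∫ t in η..R, (X ^ 2 + t ^ 2)⁻¹ ≤ Real.pi / (2 * X) := by
  have h1 : ∀ t : ℝ, (X ^ 2 + t ^ 2)⁻¹ = X⁻¹ * (X⁻¹ * (1 + (t / X) ^ 2)⁻¹) := by
    intro t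
    rw [div_pow, one_add_div (by positivity)]
    field_simp
  simp only [h1]
  rw [intervalIntegral.integral_const_mul, intervalIntegral.integral_const_mul]
  have h2 : ∫ t in η..R, (1 + (t / X) ^ 2)⁻¹
      = X * (Real.arctan (R / X) - Real.arctan (η / X)) := by
    rw [intervalIntegral.integral_comp_div (fun s : ℝ => (1 + s ^ 2)⁻¹) (ne_of_gt hX)]
    rw [integral_inv_one_add_sq]
    simp
  rw [h2]
  have h3 : Real.arctan (R / X) - Real.arctan (η / X) ≤ Real.pi / 2 := by
    have ha := Real.arctan_lt_pi_div_two (R / X)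
    have hb : Real.arctan 0 ≤ Real.arctan (η / X) :=
      Real.arctan_strictMono.monotone (by positivity)
    rw [Real.arctan_zero] at hb
    linarith
  calc X⁻¹ * (X⁻¹ * (X * (Real.arctan (R / X) - Real.arctan (η / X))))
      = X⁻¹ * (Real.arctan (R / X) - Real.arctan (η / X)) := by
        field_simp
    _ ≤ X⁻¹ * (Real.pi / 2) := by
        apply mul_le_mul_of_nonneg_left h3 (by positivity)
    _ = Real.pi / (2 * X) := by
        rw [inv_mul_eq_div, div_div]

lemma edge_abs_le {T : H →L[ℂ] H} (hT : (imPart T).IsPositive) (x : H) {η R X : ℝ}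
    (hη : 0 < η) (hR : η ≤ R) (hX : 2 * ‖T‖ + 2 ≤ |X|) :
    |∫ t in η..R, (qf T x ((X : ℂ) + (t : ℂ) * Complex.I)).re|
      ≤ (|X| + 2 * ‖T‖) * ‖x‖ ^ 2 * (Real.pi / (2 * |X|)) := by
  have hM : (0:ℝ) ≤ ‖T‖ := norm_nonneg T
  have hXpos : (0:ℝ) < |X| := by linarith
  have hRpos : 0 < R := lt_of_lt_of_le hη hR
  have hbound : ∀ t ∈ Set.uIcc η R, |(qf T x ((X : ℂ) + (t : ℂ) * Complex.I)).re|
      ≤ (|X| + 2 * ‖T‖) * ‖x‖ ^ 2 * (X ^ 2 + t ^ 2)⁻¹ := by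
    intro t ht
    have ht0 : 0 < t := by
      rcases Set.mem_uIcc.mp ht with h | h
      · linarith [h.1]
      · linarith [h.1]
    set z : ℂ := (X : ℂ) + (t : ℂ) * Complex.I with hz
    have hzre : z.re = X := by simp [hz]
    have hzim : z.im = t := by simp [hz]
    have hns : Complex.normSq z = X ^ 2 + t ^ 2 := by
      rw [hz, Complex.normSq_add_mul_I]
    have habs : 2 * ‖T‖ + 2 ≤ ‖z‖ := by
      calc 2 * ‖T‖ + 2 ≤ |X| := hX
        _ = |z.re| := by rw [hzre]
        _ ≤ ‖z‖ := Complex.abs_re_le_norm z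
    have hnear := re_qf_near hT x (z := z) (by rw [hzim]; exact ht0) habs
    rw [hns, hzre] at hnear
    have h2 : |X / (X ^ 2 + t ^ 2) * ‖x‖ ^ 2| = |X| * ‖x‖ ^ 2 * (X ^ 2 + t ^ 2)⁻¹ := by
      rw [abs_mul, abs_div, _root_.abs_of_nonneg (show (0:ℝ) ≤ X ^ 2 + t ^ 2 by positivity),
        _root_.abs_of_nonneg (show (0:ℝ) ≤ ‖x‖ ^ 2 by positivity), div_eq_mul_inv]
      ring
    have h3 : |(qf T x z).re|
        ≤ |(qf T x z).re - X / (X ^ 2 + t ^ 2) * ‖x‖ ^ 2|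
          + |X / (X ^ 2 + t ^ 2) * ‖x‖ ^ 2| := by
      have := abs_add_le ((qf T x z).re - X / (X ^ 2 + t ^ 2) * ‖x‖ ^ 2)
        (X / (X ^ 2 + t ^ 2) * ‖x‖ ^ 2)
      simpa using this
    calc |(qf T x z).re|
        ≤ 2 * ‖T‖ * ‖x‖ ^ 2 / (X ^ 2 + t ^ 2) + |X| * ‖x‖ ^ 2 * (X ^ 2 + t ^ 2)⁻¹ := by
          rw [← h2]; linarith
      _ = (|X| + 2 * ‖T‖) * ‖x‖ ^ 2 * (X ^ 2 + t ^ 2)⁻¹ := by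
          rw [div_eq_mul_inv]; ring
  have hcont : ContinuousOn (fun t : ℝ => qf T x ((X : ℂ) + (t : ℂ) * Complex.I))
      (Set.uIcc η R) := by
    intro t ht
    have ht0 : 0 < t := by
      rcases Set.mem_uIcc.mp ht with h | h
      · linarith [h.1]
      · linarith [h.1]
    apply ContinuousAt.continuousWithinAt
    have hmap : Continuous (fun t : ℝ => ((X : ℂ) + (t : ℂ) * Complex.I)) :=
      continuous_const.add (Complex.continuous_ofReal.mul continuous_const)
    exact ContinuousAt.comp (f := fun t : ℝ => ((X : ℂ) + (t : ℂ) * Complex.I)) (x := t)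
      (continuousAt_qf_of_im_pos hT x (by simpa using ht0)) hmap.continuousAt
  have hII1 : IntervalIntegrable
      (fun t : ℝ => |(qf T x ((X : ℂ) + (t : ℂ) * Complex.I)).re|) volume η R := by
    apply ContinuousOn.intervalIntegrable
    exact (Complex.continuous_re.comp_continuousOn hcont).abs
  have hII2 : IntervalIntegrable
      (fun t : ℝ => (|X| + 2 * ‖T‖) * ‖x‖ ^ 2 * (X ^ 2 + t ^ 2)⁻¹) volume η R := by
    apply Continuous.intervalIntegrable
    have h6 : (0:ℝ) < X ^ 2 := by nlinarith [_root_.sq_abs X]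
    have hc1 : Continuous (fun t : ℝ => (X ^ 2 + t ^ 2)⁻¹) := by
      apply Continuous.inv₀
      · continuity
      · intro t
        have h7 : (0:ℝ) < X ^ 2 + t ^ 2 := by nlinarith [sq_nonneg t]
        exact ne_of_gt h7
    exact continuous_const.mul hc1
  have h5 := intervalIntegral.norm_integral_le_integral_norm
    (f := fun t : ℝ => (qf T x ((X : ℂ) + (t : ℂ) * Complex.I)).re) (μ := volume) hR
  simp only [Real.norm_eq_abs] at h5
  calc |∫ t in η..R, (qf T x ((X : ℂ) + (t : ℂ) * Complex.I)).re|
      ≤ ∫ t in η..R, |(qf T x ((X : ℂ) + (t : ℂ) * Complex.I)).re| := h5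
    _ ≤ ∫ t in η..R, (|X| + 2 * ‖T‖) * ‖x‖ ^ 2 * (X ^ 2 + t ^ 2)⁻¹ := by
        apply intervalIntegral.integral_mono_on hR hII1 hII2
        intro t ht
        exact hbound t (by rw [Set.uIcc_of_le hR]; exact ht)
    _ = (|X| + 2 * ‖T‖) * ‖x‖ ^ 2 * ∫ t in η..R, (X ^ 2 + t ^ 2)⁻¹ := by
        rw [intervalIntegral.integral_const_mul]
    _ ≤ (|X| + 2 * ‖T‖) * ‖x‖ ^ 2 * (Real.pi / (2 * |X|)) := by
        have harc : ∫ t in η..R, (X ^ 2 + t ^ 2)⁻¹ ≤ Real.pi / (2 * |X|) := by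
          have h8 := arc_integral_le (X := |X|) hXpos hη.le hR
          rwa [_root_.sq_abs] at h8
        apply mul_le_mul_of_nonneg_left harc (by positivity)

lemma bottom_im_nonpos {T : H →L[ℂ] H} (hT : (imPart T).IsPositive) (x : H)
    {η : ℝ} (hη : 0 < η) {X : ℝ} (hX : 0 ≤ X) :
    ∫ s in (0:ℝ)..X, (qf T x ((s : ℂ) + (η : ℂ) * Complex.I)).im ≤ 0 := by
  have h1 : ∫ s in (0:ℝ)..X, (qf T x ((s : ℂ) + (η : ℂ) * Complex.I)).im
      ≤ ∫ _s in (0:ℝ)..X, (0:ℝ) := by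
    apply intervalIntegral.integral_mono_on hX
      ((Complex.continuous_im.comp_continuousOn ?_).intervalIntegrable)
      intervalIntegrable_const
    · intro s _
      exact im_qf_nonpos hT x (by simpa using hη)
    · intro s _
      apply ContinuousAt.continuousWithinAt
      have hmap : Continuous (fun s : ℝ => ((s : ℂ) + (η : ℂ) * Complex.I)) :=
        Complex.continuous_ofReal.add continuous_const
      exact ContinuousAt.comp (f := fun s : ℝ => ((s : ℂ) + (η : ℂ) * Complex.I)) (x := s)
        (continuousAt_qf_of_im_pos hT x (by simpa using hη)) hmap.continuousAt
  simpa using h1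

lemma bottom_im_nonneg {T : H →L[ℂ] H} (hT : (imPart T).IsPositive) (x : H)
    {η : ℝ} (hη : 0 < η) {X : ℝ} (hX : X ≤ 0) :
    0 ≤ ∫ s in (0:ℝ)..X, (qf T x ((s : ℂ) + (η : ℂ) * Complex.I)).im := by
  have h1 : ∫ s in X..(0:ℝ), (qf T x ((s : ℂ) + (η : ℂ) * Complex.I)).im
      ≤ ∫ _s in X..(0:ℝ), (0:ℝ) := by
    apply intervalIntegral.integral_mono_on hX
      ((Complex.continuous_im.comp_continuousOn ?_).intervalIntegrable)
      intervalIntegrable_const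
    · intro s _
      exact im_qf_nonpos hT x (by simpa using hη)
    · intro s _
      apply ContinuousAt.continuousWithinAt
      have hmap : Continuous (fun s : ℝ => ((s : ℂ) + (η : ℂ) * Complex.I)) :=
        Complex.continuous_ofReal.add continuous_const
      exact ContinuousAt.comp (f := fun s : ℝ => ((s : ℂ) + (η : ℂ) * Complex.I)) (x := s)
        (continuousAt_qf_of_im_pos hT x (by simpa using hη)) hmap.continuousAt
  rw [intervalIntegral.integral_symm X (0:ℝ)]
  simp only [intervalIntegral.integral_const, smul_zero] at h1
  linarith

lemma top_abs_le {T : H →L[ℂ] H} (hT : (imPart T).IsPositive) (x : H)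
    {R : ℝ} (hR : 0 < R) (X : ℝ) :
    |∫ s in (0:ℝ)..X, (qf T x ((s : ℂ) + (R : ℂ) * Complex.I)).im|
      ≤ ‖x‖ ^ 2 / R * |X| := by
  have h1 := intervalIntegral.norm_integral_le_of_norm_le_const
    (C := ‖x‖ ^ 2 / R) (a := (0:ℝ)) (b := X)
    (f := fun s : ℝ => (qf T x ((s : ℂ) + (R : ℂ) * Complex.I)).im) ?_
  · rw [Real.norm_eq_abs] at h1
    simpa using h1
  · intro s _
    rw [Real.norm_eq_abs]
    have h2 : 0 < ((s : ℂ) + (R : ℂ) * Complex.I).im := by simpa using hR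
    calc |(qf T x ((s : ℂ) + (R : ℂ) * Complex.I)).im|
        ≤ ‖qf T x ((s : ℂ) + (R : ℂ) * Complex.I)‖ := Complex.abs_im_le_norm _
      _ ≤ ‖x‖ ^ 2 / ((s : ℂ) + (R : ℂ) * Complex.I).im := abs_qf_le hT x h2
      _ = ‖x‖ ^ 2 / R := by norm_num

lemma abs_integral_re_qf_le {T : H →L[ℂ] H} (hT : (imPart T).IsPositive)
    (hTinv : IsUnit T) (x : H) :
    |∫ t in Ioi (0:ℝ), (qf T x ((t : ℂ) * Complex.I)).re| ≤ Real.pi / 2 * ‖x‖ ^ 2 := by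
  have hM : (0:ℝ) ≤ ‖T‖ := norm_nonneg T
  have hstep : ∀ η : ℝ, 0 < η →
      |∫ t in Ioi η, (qf T x ((t : ℂ) * Complex.I)).re| ≤ Real.pi / 2 * ‖x‖ ^ 2 := by
    intro η hη
    have hInt : IntegrableOn (fun t : ℝ => (qf T x ((t : ℂ) * Complex.I)).re) (Ioi η) :=
      (integrableOn_re_qf hT hTinv x).mono_set (Ioi_subset_Ioi hη.le)
    have hTendR : Tendsto (fun R : ℝ => ∫ t in η..R, (qf T x ((t : ℂ) * Complex.I)).re)
        atTop (𝓝 (∫ t in Ioi η, (qf T x ((t : ℂ) * Complex.I)).re)) :=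
      MeasureTheory.intervalIntegral_tendsto_integral_Ioi η hInt tendsto_id
    have hXbound : ∀ X : ℝ, 2 * ‖T‖ + 2 ≤ X →
        |∫ t in Ioi η, (qf T x ((t : ℂ) * Complex.I)).re|
          ≤ (X + 2 * ‖T‖) * ‖x‖ ^ 2 * (Real.pi / (2 * X)) := by
      intro X hXbig
      have hXpos : 0 < X := by linarith
      have hXabs : |X| = X := abs_of_pos hXpos
      set C : ℝ := (X + 2 * ‖T‖) * ‖x‖ ^ 2 * (Real.pi / (2 * X)) with hC
      have hup : ∀ R : ℝ, η ≤ R → ∫ t in η..R, (qf T x ((t : ℂ) * Complex.I)).re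
          ≤ ‖x‖ ^ 2 / R * X + C := by
        intro R hR
        have hRpos : 0 < R := lt_of_lt_of_le hη hR
        have hid := rect_re_identity hT x X hη hR
        have h1 := bottom_im_nonpos hT x hη hXpos.le
        have h2 := top_abs_le hT x hRpos X
        have h3 := edge_abs_le hT x hη hR (by rw [hXabs]; exact hXbig)
        rw [hXabs] at h2 h3
        rw [hid, hC]
        linarith [(abs_le.mp h2).1, (abs_le.mp h3).2]
      have hlo : ∀ R : ℝ, η ≤ R → -(‖x‖ ^ 2 / R * X + C)
          ≤ ∫ t in η..R, (qf T x ((t : ℂ) * Complex.I)).re := by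
        intro R hR
        have hRpos : 0 < R := lt_of_lt_of_le hη hR
        have hid := rect_re_identity hT x (-X) hη hR
        have h1 := bottom_im_nonneg hT x hη (by linarith : -X ≤ 0)
        have h2 := top_abs_le hT x hRpos (-X)
        have h3 := edge_abs_le hT x (X := -X) hη hR (by rw [abs_neg, hXabs]; exact hXbig)
        rw [abs_neg, hXabs] at h2 h3
        rw [hid, hC]
        linarith [(abs_le.mp h2).2, (abs_le.mp h3).1]
      have hCtend : Tendsto (fun R : ℝ => ‖x‖ ^ 2 / R * X + C) atTop (𝓝 C) := by
        have h4 : Tendsto (fun R : ℝ => ‖x‖ ^ 2 / R) atTop (𝓝 0) :=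
          tendsto_const_nhds.div_atTop tendsto_id
        have h5 := (h4.mul_const X).add_const C
        simpa using h5
      have hub2 : ∫ t in Ioi η, (qf T x ((t : ℂ) * Complex.I)).re ≤ C :=
        le_of_tendsto_of_tendsto hTendR hCtend
          ((eventually_ge_atTop η).mono fun R hR => hup R hR)
      have hlb2 : -C ≤ ∫ t in Ioi η, (qf T x ((t : ℂ) * Complex.I)).re := by
        have hCtend' : Tendsto (fun R : ℝ => -(‖x‖ ^ 2 / R * X + C)) atTop (𝓝 (-C)) :=
          hCtend.neg
        exact le_of_tendsto_of_tendsto hCtend' hTendR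
          ((eventually_ge_atTop η).mono fun R hR => hlo R hR)
      exact abs_le.mpr ⟨hlb2, hub2⟩
    have hCX : Tendsto (fun X : ℝ => (X + 2 * ‖T‖) * ‖x‖ ^ 2 * (Real.pi / (2 * X))) atTop
        (𝓝 (Real.pi / 2 * ‖x‖ ^ 2)) := by
      have heq : ∀ᶠ X : ℝ in atTop, (X + 2 * ‖T‖) * ‖x‖ ^ 2 * (Real.pi / (2 * X))
          = Real.pi / 2 * ‖x‖ ^ 2 + (‖T‖ * Real.pi * ‖x‖ ^ 2) / X := by
        filter_upwards [eventually_gt_atTop (0:ℝ)] with X hX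
        field_simp
      rw [tendsto_congr' heq]
      have h4 : Tendsto (fun X : ℝ => (‖T‖ * Real.pi * ‖x‖ ^ 2) / X) atTop (𝓝 0) :=
        tendsto_const_nhds.div_atTop tendsto_id
      simpa using tendsto_const_nhds.add h4
    exact ge_of_tendsto hCX
      ((eventually_ge_atTop (2 * ‖T‖ + 2)).mono fun X hX => hXbound X hX)
  have hmono : Monotone (fun n : ℕ => Ioi ((1:ℝ) / (n + 1))) := by
    intro m n hmn
    apply Ioi_subset_Ioi
    apply one_div_le_one_div_of_le (by positivity)
    have := (Nat.cast_le (α := ℝ)).mpr hmn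
    linarith
  have hunion : ⋃ n : ℕ, Ioi ((1:ℝ) / (n + 1)) = Ioi (0:ℝ) := by
    ext t
    simp only [mem_iUnion, mem_Ioi]
    constructor
    · rintro ⟨n, hn⟩
      have : (0:ℝ) < 1 / ((n:ℝ) + 1) := by positivity
      linarith
    · intro ht
      exact exists_nat_one_div_lt ht
  have hTend2 := MeasureTheory.tendsto_setIntegral_of_monotone
    (fun _n : ℕ => measurableSet_Ioi) hmono
    (by rw [hunion]; exact integrableOn_re_qf hT hTinv x)
  rw [hunion] at hTend2
  have habs2 : Tendsto
      (fun n : ℕ => |∫ t in Ioi ((1:ℝ) / (n + 1)), (qf T x ((t : ℂ) * Complex.I)).re|)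
      atTop (𝓝 |∫ t in Ioi (0:ℝ), (qf T x ((t : ℂ) * Complex.I)).re|) := hTend2.abs
  exact le_of_tendsto habs2 (Filter.Eventually.of_forall fun n => hstep _ (by positivity))

lemma im_inner_opLog_bounds {T : H →L[ℂ] H} (hT : (imPart T).IsPositive)
    (hTinv : IsUnit T) (y : H) :
    0 ≤ (⟪y, opLog T y⟫_ℂ).im ∧ (⟪y, opLog T y⟫_ℂ).im ≤ Real.pi * ‖y‖ ^ 2 := by
  have h1 := im_inner_opLog hT hTinv y
  have h2 := abs_le.mp (abs_integral_re_qf_le hT hTinv y)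
  rw [h1]
  constructor
  · linarith [h2.2]
  · linarith [h2.1]

theorem imPart_opLog_bounds' {T : H →L[ℂ] H}
    (hT : (imPart T).IsPositive) (hTinv : IsUnit T) :
    (imPart (opLog T)).IsPositive ∧
    (((Real.pi : ℂ) • (1 : H →L[ℂ] H)) - imPart (opLog T)).IsPositive := by
  constructor
  · refine ⟨(isSelfAdjoint_imPart _).isSymmetric, fun y => ?_⟩
    rw [reApplyInnerSelf_imPart]
    exact (im_inner_opLog_bounds hT hTinv y).1
  · constructor
    · apply ContinuousLinearMap.isSelfAdjoint_iff_isSymmetric.mp (IsSelfAdjoint.sub ?_ (isSelfAdjoint_imPart (opLog T)))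
      show star _ = _
      rw [star_smul, star_one]
      congr 1
      simp [Complex.ext_iff]
    · intro y
      rw [ContinuousLinearMap.reApplyInnerSelf_apply]
      have hterm : (((Real.pi : ℂ) • (1 : H →L[ℂ] H)) - imPart (opLog T)) y
          = (Real.pi : ℂ) • y - imPart (opLog T) y := by
        simp [ContinuousLinearMap.sub_apply, ContinuousLinearMap.smul_apply,
          ContinuousLinearMap.one_apply]
      rw [hterm, inner_sub_left, inner_smul_left, RCLike.re_to_complex, Complex.sub_re]
      have hyy : ⟪y, y⟫_ℂ = ((‖y‖ ^ 2 : ℝ) : ℂ) := by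
        rw [inner_self_eq_norm_sq_to_K]; norm_cast
      have hre1 : ((starRingEnd ℂ) ((Real.pi : ℝ) : ℂ) * ⟪y, y⟫_ℂ).re
          = Real.pi * ‖y‖ ^ 2 := by
        rw [Complex.conj_ofReal, hyy, ← Complex.ofReal_mul, Complex.ofReal_re]
      have hre2 : (⟪imPart (opLog T) y, y⟫_ℂ).re = (⟪y, opLog T y⟫_ℂ).im := by
        rw [inner_imPart_apply, Complex.ofReal_re]
      rw [hre1, hre2]
      have := (im_inner_opLog_bounds hT hTinv y).2
      linarith

end AuxiliaryLemmas

/-- Lemma 2.5 (consequence): `0 ≤ Im (log T) ≤ π I` for dissipative boundedly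
invertible `T`. -/
theorem imPart_opLog_bounds [SeparableSpace H]
    (T : H →L[ℂ] H) (hT : (imPart T).IsPositive) (hTinv : IsUnit T) :
    (imPart (opLog T)).IsPositive ∧
    (((Real.pi : ℂ) • (1 : H →L[ℂ] H)) - imPart (opLog T)).IsPositive :=
  imPart_opLog_bounds' hT hTinv

end SpectralShift
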